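/- arXiv:2407.19312 — 2 statements merged into one kernel-verified Lean document; each statement's English description precedes it below -/
import Mathlib

section
/- For every real β > 0 and every positive integer j, the series ∑_{k=1}^∞ 1/(k^β · (1+|k−j|)) converges and ∑_{k=1}^∞ 1/(k^β · (1+|k−j|)) < 2 + 2/β. -/
open Real Filter

/-- Key per-term telescoping inequality. -/
private lemma rpow_telescope_lt {β x : ℝ} (hβ : 0 < β) (hx : 0 < x) :
    (x + 1) ^ (-(1 + β)) < 1 / β * (x ^ (-β) - (x + 1) ^ (-β)) := by
  have hx1 : (0:ℝ) < x + 1 := by linarith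
  have hA : (0:ℝ) < x ^ β := Real.rpow_pos_of_pos hx β
  have hB : (0:ℝ) < (x + 1) ^ β := Real.rpow_pos_of_pos hx1 β
  have hlog : 1 / (x + 1) ≤ Real.log ((x + 1) / x) := by
    have h := Real.log_le_sub_one_of_pos (show (0:ℝ) < x / (x + 1) by positivity)
    have e1 : Real.log (x / (x + 1)) = -Real.log ((x + 1) / x) := by
      rw [← Real.log_inv]
      congr 1
      field_simp
    rw [e1] at h
    have e2 : x / (x + 1) - 1 = -(1 / (x + 1)) := by field_simp; ring
    rw [e2] at h
    linarith
  have hlogpos : 0 < Real.log ((x + 1) / x) := lt_of_lt_of_le (by positivity) hlog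
  have hkey : 1 + β / (x + 1) < (x + 1) ^ β / x ^ β := by
    have h1 : β * Real.log ((x + 1) / x) + 1 < Real.exp (β * Real.log ((x + 1) / x)) :=
      Real.add_one_lt_exp (ne_of_gt (by positivity))
    have h2 : Real.exp (β * Real.log ((x + 1) / x)) = ((x + 1) / x) ^ β := by
      rw [Real.rpow_def_of_pos (by positivity), mul_comm]
    have h3 : ((x + 1) / x) ^ β = (x + 1) ^ β / x ^ β := Real.div_rpow hx1.le hx.le β
    have h4 : β / (x + 1) ≤ β * Real.log ((x + 1) / x) := by
      have h5 := mul_le_mul_of_nonneg_left hlog hβ.le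
      calc β / (x + 1) = β * (1 / (x + 1)) := by ring
      _ ≤ β * Real.log ((x + 1) / x) := h5
    calc 1 + β / (x + 1) ≤ β * Real.log ((x + 1) / x) + 1 := by linarith
    _ < Real.exp (β * Real.log ((x + 1) / x)) := h1
    _ = (x + 1) ^ β / x ^ β := by rw [h2, h3]
  have h5 : x ^ β * (x + 1 + β) < (x + 1) * (x + 1) ^ β := by
    have h6 := mul_lt_mul_of_pos_left hkey (mul_pos hA hx1)
    have e3 : x ^ β * (x + 1) * (1 + β / (x + 1)) = x ^ β * (x + 1 + β) := by
      field_simp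
    have e4 : x ^ β * (x + 1) * ((x + 1) ^ β / x ^ β) = (x + 1) * (x + 1) ^ β := by
      field_simp
    calc x ^ β * (x + 1 + β) = x ^ β * (x + 1) * (1 + β / (x + 1)) := e3.symm
    _ < x ^ β * (x + 1) * ((x + 1) ^ β / x ^ β) := h6
    _ = (x + 1) * (x + 1) ^ β := e4
  have eA : x ^ (-β) = (x ^ β)⁻¹ := Real.rpow_neg hx.le β
  have eB : (x + 1) ^ (-β) = ((x + 1) ^ β)⁻¹ := Real.rpow_neg hx1.le β
  have eC : (x + 1) ^ (-(1 + β)) = ((x + 1) * (x + 1) ^ β)⁻¹ := by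
    rw [Real.rpow_neg hx1.le, Real.rpow_add hx1, Real.rpow_one]
  have hβ0 : β ≠ 0 := hβ.ne'
  have hA0 : x ^ β ≠ 0 := hA.ne'
  have hB0 : (x + 1) ^ β ≠ 0 := hB.ne'
  have eD : (1:ℝ) / β * ((x ^ β)⁻¹ - ((x + 1) ^ β)⁻¹)
      = ((x + 1) ^ β - x ^ β) / (β * (x ^ β * (x + 1) ^ β)) := by
    field_simp
  rw [eA, eB, eC, eD]
  rw [inv_eq_one_div, div_lt_div_iff₀ (by positivity) (by positivity)]
  nlinarith [mul_lt_mul_of_pos_right h5 hB]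

private lemma summable_auxZ (β : ℝ) (hβ : 0 < β) (c : ℕ) :
    Summable (fun m : ℕ => ((m : ℝ) + c) ^ (-(1 + β))) := by
  have base : Summable (fun n : ℕ => (n : ℝ) ^ (-(1 + β))) :=
    Real.summable_nat_rpow.mpr (by linarith)
  have h2 : (fun m : ℕ => ((m : ℝ) + c) ^ (-(1 + β)))
      = fun m : ℕ => (((m + c : ℕ) : ℝ)) ^ (-(1 + β)) := by
    funext m; push_cast; rfl
  rw [h2]
  exact (summable_nat_add_iff c).mpr base

private lemma tsum_shift2_lt (β : ℝ) (hβ : 0 < β) :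
    ∑' m : ℕ, ((m : ℝ) + 2) ^ (-(1 + β)) < 1 / β := by
  set g : ℕ → ℝ := fun m => ((m : ℝ) + 1) ^ (-β) with hg
  have hgeq : ∀ m : ℕ, g m = ((m : ℝ) + 1) ^ (-β) := fun m => rfl
  have hgeq' : ∀ m : ℕ, g (m + 1) = ((m : ℝ) + 2) ^ (-β) := by
    intro m
    rw [hgeq (m + 1)]
    congr 1
    push_cast
    ring
  have hgpos : ∀ m, 0 ≤ g m := fun m => Real.rpow_nonneg (by positivity) _
  have hg1 : ∀ m, g m ≤ 1 := by
    intro m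
    rw [hgeq m, Real.rpow_neg (by positivity : (0:ℝ) ≤ (m:ℝ)+1)]
    have h1 : (1:ℝ) ≤ ((m:ℝ)+1) ^ β := by
      calc (1:ℝ) = 1 ^ β := (Real.one_rpow β).symm
      _ ≤ ((m:ℝ)+1) ^ β := Real.rpow_le_rpow zero_le_one (by have h0 : (0:ℝ) ≤ (m:ℝ) := Nat.cast_nonneg m; linarith) hβ.le
    calc (((m:ℝ)+1) ^ β)⁻¹ ≤ 1⁻¹ := by
          exact inv_anti₀ one_pos h1
    _ = 1 := inv_one
  have hnn : ∀ m, 0 ≤ g m - g (m + 1) := by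
    intro m
    have h1 : ((m:ℝ)+1) ^ β ≤ ((m:ℝ)+2) ^ β :=
      Real.rpow_le_rpow (by positivity) (by linarith) hβ.le
    rw [hgeq m, hgeq' m]
    rw [Real.rpow_neg (by positivity : (0:ℝ) ≤ (m:ℝ)+1),
      Real.rpow_neg (by positivity : (0:ℝ) ≤ (m:ℝ)+2)]
    have := inv_anti₀ (Real.rpow_pos_of_pos (by positivity : (0:ℝ) < (m:ℝ)+1) β) h1
    linarith
  have hpartial : ∀ N, ∑ m ∈ Finset.range N, (g m - g (m + 1)) = g 0 - g N :=
    fun N => Finset.sum_range_sub' g N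
  have hsummable : Summable (fun m => g m - g (m + 1)) := by
    apply summable_of_sum_range_le hnn
    intro n
    rw [hpartial]
    have := hgpos n
    have := hg1 0
    linarith
  have htendsto : Tendsto g atTop (nhds 0) := by
    have h1 : Tendsto (fun m : ℕ => ((m:ℝ) + 1)) atTop atTop :=
      tendsto_atTop_add_const_right atTop 1 tendsto_natCast_atTop_atTop
    exact (tendsto_rpow_neg_atTop hβ).comp h1
  have hhas : HasSum (fun m => g m - g (m + 1)) 1 := by
    rw [hsummable.hasSum_iff_tendsto_nat]
    have e0 : g 0 = 1 := by rw [hgeq 0]; norm_num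
    have h2 : Tendsto (fun N => g 0 - g N) atTop (nhds (g 0 - 0)) :=
      tendsto_const_nhds.sub htendsto
    simp only [hpartial]
    rw [← e0]
    simpa using h2
  have hhasT : HasSum (fun m => 1 / β * (g m - g (m + 1))) (1 / β) := by
    have := hhas.mul_left (1 / β)
    simpa using this
  have hlt : ∀ m : ℕ, ((m : ℝ) + 2) ^ (-(1 + β)) < 1 / β * (g m - g (m + 1)) := by
    intro m
    have hx : (0:ℝ) < (m:ℝ) + 1 := by positivity
    have h := rpow_telescope_lt hβ hx
    have e1 : (m:ℝ) + 1 + 1 = (m:ℝ) + 2 := by ring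
    rw [e1] at h
    rw [hgeq m, hgeq' m]
    exact h
  have hsum2 := summable_auxZ β hβ 2
  have e3 : (fun m : ℕ => ((m : ℝ) + (2:ℕ)) ^ (-(1 + β)))
      = fun m : ℕ => ((m : ℝ) + 2) ^ (-(1 + β)) := by push_cast; rfl
  rw [e3] at hsum2
  calc ∑' m : ℕ, ((m : ℝ) + 2) ^ (-(1 + β))
      < ∑' m : ℕ, 1 / β * (g m - g (m + 1)) :=
        Summable.tsum_lt_tsum (fun m => (hlt m).le) (hlt 0) hsum2 hhasT.summable
  _ = 1 / β := hhasT.tsum_eq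

private noncomputable def B1 (β : ℝ) (J n : ℕ) : ℝ :=
  if 2 * (n + 1) ≤ J + 1 then 2 / (((J : ℝ) + 1) * ((n : ℝ) + 1) ^ β) else 0

private noncomputable def B2 (β : ℝ) (J n : ℕ) : ℝ :=
  if J + 1 < 2 * (n + 1) ∧ n + 1 ≤ J then ((J : ℝ) - n) ^ (-(1 + β)) else 0

private noncomputable def B3 (β : ℝ) (J n : ℕ) : ℝ :=
  if J < n + 1 then ((n : ℝ) + 2 - J) ^ (-(1 + β)) else 0

private lemma main_nat (β : ℝ) (hβ : 0 < β) (J : ℕ) (hJ : 1 ≤ J) :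
    Summable (fun n : ℕ => 1 / (((n:ℝ)+1) ^ β * (1 + |((n:ℝ)+1) - (J:ℝ)|))) ∧
      ∑' n : ℕ, 1 / (((n:ℝ)+1) ^ β * (1 + |((n:ℝ)+1) - (J:ℝ)|)) < 2 + 2 / β := by
  set G : ℕ → ℝ := fun n => 1 / (((n:ℝ)+1) ^ β * (1 + |((n:ℝ)+1) - (J:ℝ)|)) with hG
  have hJR : (1:ℝ) ≤ (J:ℝ) := by exact_mod_cast hJ
  -- nonnegativity
  have hGnn : ∀ n, 0 ≤ G n := by
    intro n
    simp only [hG]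
    have h1 : (0:ℝ) < ((n:ℝ)+1) ^ β := Real.rpow_pos_of_pos (by positivity) β
    positivity
  -- pointwise bound
  have hpt : ∀ n, G n ≤ B1 β J n + B2 β J n + B3 β J n := by
    intro n
    have hP : (0:ℝ) < ((n:ℝ)+1) ^ β := Real.rpow_pos_of_pos (by positivity) β
    by_cases h1 : 2 * (n + 1) ≤ J + 1
    · have h2 : ¬(J + 1 < 2 * (n + 1) ∧ n + 1 ≤ J) := by omega
      have h3 : ¬(J < n + 1) := by omega
      rw [B1, B2, B3, if_pos h1, if_neg h2, if_neg h3, add_zero, add_zero]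
      simp only [hG]
      have hk : (n:ℝ) + 1 ≤ (J:ℝ) := by exact_mod_cast (by omega : n + 1 ≤ J)
      have habs : |((n:ℝ)+1) - (J:ℝ)| = (J:ℝ) - ((n:ℝ)+1) := by
        rw [abs_of_nonpos (by linarith)]; ring
      rw [habs]
      have h2k : 2 * ((n:ℝ) + 1) ≤ (J:ℝ) + 1 := by exact_mod_cast h1
      have hden : (0:ℝ) < ((n:ℝ)+1) ^ β * (1 + ((J:ℝ) - ((n:ℝ)+1))) := by
        apply mul_pos hP
        linarith
      rw [div_le_div_iff₀ hden (by positivity)]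
      nlinarith [mul_le_mul_of_nonneg_left (by linarith : (J:ℝ) + 1 ≤ 2 * ((J:ℝ) - ((n:ℝ)+1) + 1)) hP.le]
    · by_cases h2 : n + 1 ≤ J
      · have h2' : J + 1 < 2 * (n + 1) ∧ n + 1 ≤ J := ⟨by omega, h2⟩
        have h3 : ¬(J < n + 1) := by omega
        rw [B1, B2, B3, if_neg h1, if_pos h2', if_neg h3, zero_add, add_zero]
        simp only [hG]
        have hk : (n:ℝ) + 1 ≤ (J:ℝ) := by exact_mod_cast h2
        have habs : |((n:ℝ)+1) - (J:ℝ)| = (J:ℝ) - ((n:ℝ)+1) := by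
          rw [abs_of_nonpos (by linarith)]; ring
        rw [habs]
        have hc1 : (1:ℝ) ≤ (J:ℝ) - (n:ℝ) := by linarith
        have hck : (J:ℝ) - (n:ℝ) ≤ (n:ℝ) + 1 := by
          have : J ≤ 2 * n + 1 := by omega
          have := (by exact_mod_cast this : (J:ℝ) ≤ 2 * (n:ℝ) + 1)
          linarith
        have hcpos : (0:ℝ) < (J:ℝ) - (n:ℝ) := by linarith
        have eR : ((J:ℝ) - (n:ℝ)) ^ (-(1 + β))
            = 1 / (((J:ℝ) - (n:ℝ)) ^ β * ((J:ℝ) - (n:ℝ))) := by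
          rw [Real.rpow_neg hcpos.le, Real.rpow_add hcpos, Real.rpow_one, inv_eq_one_div]
          ring_nf
        rw [eR]
        apply one_div_le_one_div_of_le
        · positivity
        · have : ((J:ℝ) - (n:ℝ)) ^ β ≤ ((n:ℝ) + 1) ^ β :=
            Real.rpow_le_rpow hcpos.le hck hβ.le
          have e1 : (1 : ℝ) + ((J:ℝ) - ((n:ℝ)+1)) = (J:ℝ) - (n:ℝ) := by ring
          rw [e1]
          nlinarith
      · have h3 : J < n + 1 := by omega
        have h2' : ¬(J + 1 < 2 * (n + 1) ∧ n + 1 ≤ J) := by omega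
        rw [B1, B2, B3, if_neg h1, if_neg h2', if_pos h3, zero_add, zero_add]
        simp only [hG]
        have hk : (J:ℝ) ≤ (n:ℝ) + 1 := by exact_mod_cast h3.le
        have habs : |((n:ℝ)+1) - (J:ℝ)| = ((n:ℝ)+1) - (J:ℝ) := by
          rw [abs_of_nonneg (by linarith)]
        rw [habs]
        have hc1 : (1:ℝ) ≤ (n:ℝ) + 2 - (J:ℝ) := by linarith
        have hck : (n:ℝ) + 2 - (J:ℝ) ≤ (n:ℝ) + 1 := by linarith
        have hcpos : (0:ℝ) < (n:ℝ) + 2 - (J:ℝ) := by linarith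
        have eR : ((n:ℝ) + 2 - (J:ℝ)) ^ (-(1 + β))
            = 1 / (((n:ℝ) + 2 - (J:ℝ)) ^ β * ((n:ℝ) + 2 - (J:ℝ))) := by
          rw [Real.rpow_neg hcpos.le, Real.rpow_add hcpos, Real.rpow_one, inv_eq_one_div]
          ring_nf
        rw [eR]
        apply one_div_le_one_div_of_le
        · positivity
        · have : ((n:ℝ) + 2 - (J:ℝ)) ^ β ≤ ((n:ℝ) + 1) ^ β :=
            Real.rpow_le_rpow hcpos.le hck hβ.le
          have e1 : (1 : ℝ) + (((n:ℝ)+1) - (J:ℝ)) = (n:ℝ) + 2 - (J:ℝ) := by ring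
          rw [e1]
          nlinarith
  -- B1 facts
  have hB1zero : ∀ n ∉ Finset.range ((J+1)/2), B1 β J n = 0 := by
    intro n hn
    simp only [Finset.mem_range] at hn
    rw [B1, if_neg (by omega)]
  have hB1sum : Summable (B1 β J) := summable_of_ne_finset_zero hB1zero
  have hB1tsum : ∑' n, B1 β J n ≤ 1 := by
    rw [tsum_eq_sum hB1zero]
    have hcard : ((J+1)/2 : ℕ) * (2 / ((J:ℝ)+1)) ≤ 1 := by
      have h1 : (2:ℝ) * (((J+1)/2 : ℕ) : ℝ) ≤ (J:ℝ) + 1 := by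
        exact_mod_cast (by omega : 2 * ((J+1)/2) ≤ J + 1)
      rw [mul_div_assoc']
      rw [div_le_one (by positivity)]
      linarith
    calc ∑ n ∈ Finset.range ((J+1)/2), B1 β J n
        ≤ ∑ n ∈ Finset.range ((J+1)/2), 2 / ((J:ℝ)+1) := by
          apply Finset.sum_le_sum
          intro n _
          rw [B1]
          by_cases h : 2 * (n + 1) ≤ J + 1
          · rw [if_pos h]
            have h1 : (1:ℝ) ≤ ((n:ℝ)+1) ^ β := by
              calc (1:ℝ) = 1 ^ β := (Real.one_rpow β).symm
              _ ≤ ((n:ℝ)+1) ^ β := Real.rpow_le_rpow zero_le_one (by have h0 : (0:ℝ) ≤ (n:ℝ) := Nat.cast_nonneg n; linarith) hβ.le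
            have hden : ((J:ℝ)+1) ≤ ((J:ℝ)+1) * ((n:ℝ)+1) ^ β := by nlinarith
            exact div_le_div_of_nonneg_left (by norm_num) (by positivity) hden
          · rw [if_neg h]; positivity
    _ = ((J+1)/2 : ℕ) * (2 / ((J:ℝ)+1)) := by
          rw [Finset.sum_const, Finset.card_range, nsmul_eq_mul]
    _ ≤ 1 := hcard
  -- B2 facts
  have hB2zero : ∀ n ∉ Finset.range J, B2 β J n = 0 := by
    intro n hn
    simp only [Finset.mem_range] at hn
    rw [B2, if_neg (by omega)]
  have hB2sum : Summable (B2 β J) := summable_of_ne_finset_zero hB2zero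
  have hZ1sum : Summable (fun m : ℕ => ((m : ℝ) + 1) ^ (-(1 + β))) := by
    have := summable_auxZ β hβ 1
    have e : (fun m : ℕ => ((m : ℝ) + (1:ℕ)) ^ (-(1 + β)))
        = fun m : ℕ => ((m : ℝ) + 1) ^ (-(1 + β)) := by push_cast; rfl
    rwa [e] at this
  have hZ2sum : Summable (fun m : ℕ => ((m : ℝ) + 2) ^ (-(1 + β))) := by
    have := summable_auxZ β hβ 2
    have e : (fun m : ℕ => ((m : ℝ) + (2:ℕ)) ^ (-(1 + β)))
        = fun m : ℕ => ((m : ℝ) + 2) ^ (-(1 + β)) := by push_cast; rfl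
    rwa [e] at this
  have hZ1eq : ∑' m : ℕ, ((m : ℝ) + 1) ^ (-(1 + β))
      = 1 + ∑' m : ℕ, ((m : ℝ) + 2) ^ (-(1 + β)) := by
    rw [Summable.tsum_eq_zero_add hZ1sum]
    congr 1
    · norm_num
    · apply tsum_congr
      intro m
      push_cast
      ring_nf
  have hB2tsum : ∑' n, B2 β J n ≤ 1 + ∑' m : ℕ, ((m : ℝ) + 2) ^ (-(1 + β)) := by
    rw [tsum_eq_sum hB2zero]
    have step1 : ∑ n ∈ Finset.range J, B2 β J n
        ≤ ∑ n ∈ Finset.range J, (((J - 1 - n : ℕ) : ℝ) + 1) ^ (-(1 + β)) := by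
      apply Finset.sum_le_sum
      intro n hn
      simp only [Finset.mem_range] at hn
      rw [B2]
      by_cases h : J + 1 < 2 * (n + 1) ∧ n + 1 ≤ J
      · rw [if_pos h]
        have e : ((J - 1 - n : ℕ) : ℝ) + 1 = (J:ℝ) - n := by
          have : ((J - 1 - n : ℕ) : ℝ) = (J:ℝ) - 1 - n := by
            have : J - 1 - n = J - (1 + n) := by omega
            rw [this, Nat.cast_sub (by omega)]
            push_cast; ring
          rw [this]; ring
        rw [e]
      · rw [if_neg h]
        positivity
    have step2 : ∑ n ∈ Finset.range J, (((J - 1 - n : ℕ) : ℝ) + 1) ^ (-(1 + β))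
        = ∑ m ∈ Finset.range J, ((m : ℝ) + 1) ^ (-(1 + β)) :=
      Finset.sum_range_reflect (fun m => ((m : ℝ) + 1) ^ (-(1 + β))) J
    have step3 : ∑ m ∈ Finset.range J, ((m : ℝ) + 1) ^ (-(1 + β))
        ≤ ∑' m : ℕ, ((m : ℝ) + 1) ^ (-(1 + β)) :=
      Summable.sum_le_tsum _ (fun m _ => Real.rpow_nonneg (by positivity) _) hZ1sum
    calc ∑ n ∈ Finset.range J, B2 β J n
        ≤ ∑ m ∈ Finset.range J, ((m : ℝ) + 1) ^ (-(1 + β)) := by rw [← step2]; exact step1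
    _ ≤ ∑' m : ℕ, ((m : ℝ) + 1) ^ (-(1 + β)) := step3
    _ = 1 + ∑' m : ℕ, ((m : ℝ) + 2) ^ (-(1 + β)) := hZ1eq
  -- B3 facts
  have hB3shift : ∀ m : ℕ, B3 β J (m + J) = ((m : ℝ) + 2) ^ (-(1 + β)) := by
    intro m
    rw [B3, if_pos (by omega)]
    congr 1
    push_cast
    ring
  have hB3sum : Summable (B3 β J) := by
    rw [← summable_nat_add_iff J]
    simp only [hB3shift]
    exact hZ2sum
  have hB3tsum : ∑' n, B3 β J n = ∑' m : ℕ, ((m : ℝ) + 2) ^ (-(1 + β)) := by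
    have h0 : ∀ n ∈ Finset.range J, B3 β J n = 0 := by
      intro n hn
      simp only [Finset.mem_range] at hn
      rw [B3, if_neg (by omega)]
    rw [← Summable.sum_add_tsum_nat_add J hB3sum]
    rw [Finset.sum_congr rfl h0]
    simp only [Finset.sum_const_zero, zero_add]
    apply tsum_congr
    intro m
    rw [add_comm m J, ← hB3shift m, add_comm J m]
  -- assemble
  have hBsum : Summable (fun n => B1 β J n + B2 β J n + B3 β J n) :=
    (hB1sum.add hB2sum).add hB3sum
  have hGsum : Summable G := Summable.of_nonneg_of_le hGnn hpt hBsum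
  refine ⟨hGsum, ?_⟩
  have hZlt := tsum_shift2_lt β hβ
  calc ∑' n, G n ≤ ∑' n, (B1 β J n + B2 β J n + B3 β J n) := Summable.tsum_le_tsum hpt hGsum hBsum
  _ = ∑' n, B1 β J n + ∑' n, B2 β J n + ∑' n, B3 β J n := by
      rw [Summable.tsum_add (hB1sum.add hB2sum) hB3sum, Summable.tsum_add hB1sum hB2sum]
  _ ≤ 1 + (1 + ∑' m : ℕ, ((m : ℝ) + 2) ^ (-(1 + β)))
        + ∑' m : ℕ, ((m : ℝ) + 2) ^ (-(1 + β)) := by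
      rw [hB3tsum]
      have := hB1tsum
      have := hB2tsum
      linarith
  _ < 2 + 2 / β := by
      have h1 : 1 / β + 1 / β = 2 / β := by ring
      linarith

/-- For every real `β > 0` and every positive integer `j`, the series
`∑_{k=1}^∞ 1/(k^β · (1+|k−j|))` converges and its sum is strictly less than `2 + 2/β`. -/
theorem sum_one_div_rpow_mul_shift_lt (β : ℝ) (hβ : 0 < β) (j : ℕ+) :
    Summable (fun k : ℕ+ => 1 / ((k : ℝ) ^ β * (1 + |(k : ℝ) - (j : ℝ)|))) ∧
      ∑' k : ℕ+, 1 / ((k : ℝ) ^ β * (1 + |(k : ℝ) - (j : ℝ)|)) < 2 + 2 / β := by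
  have hmain := main_nat β hβ (j : ℕ) j.one_le
  set f : ℕ+ → ℝ := fun k => 1 / ((k : ℝ) ^ β * (1 + |(k : ℝ) - (j : ℝ)|)) with hf
  have hcomp : ∀ n : ℕ, f (Equiv.pnatEquivNat.symm n)
      = 1 / (((n:ℝ)+1) ^ β * (1 + |((n:ℝ)+1) - ((j:ℕ):ℝ)|)) := by
    intro n
    rw [hf]
    have e : ((Equiv.pnatEquivNat.symm n : ℕ+) : ℝ) = (n:ℝ) + 1 := by
      have : ((Equiv.pnatEquivNat.symm n : ℕ+) : ℕ) = n + 1 := by simp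
      exact_mod_cast this
    simp only [e]
  have hsum : Summable f := by
    rw [← Equiv.summable_iff Equiv.pnatEquivNat.symm]
    have : (f ∘ Equiv.pnatEquivNat.symm)
        = fun n : ℕ => 1 / (((n:ℝ)+1) ^ β * (1 + |((n:ℝ)+1) - ((j:ℕ):ℝ)|)) := by
      funext n; exact hcomp n
    rw [this]
    exact hmain.1
  refine ⟨hsum, ?_⟩
  have heq : ∑' k : ℕ+, f k
      = ∑' n : ℕ, 1 / (((n:ℝ)+1) ^ β * (1 + |((n:ℝ)+1) - ((j:ℕ):ℝ)|)) := by
    rw [← Equiv.tsum_eq Equiv.pnatEquivNat.symm f]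
    exact tsum_congr hcomp
  rw [hf] at heq
  rw [heq]
  exact hmain.2
end

section
/- Let s > 0 and 0 < β ≤ min{s/2, 1}. Then for all positive integers i and j, ∑_{k=1}^∞ (i∧j)^β / ( (i∧k)^β · (k∧j)^β · (1+|k−j|) ) · ( w(i,j) / ( w(i,k)·w(k,j) ) )^s ≤ 2^{s/2+2}/β. -/
noncomputable def DD (x y : ℝ) : ℝ := Real.sqrt (min x y) + |x - y|

namespace DD

lemma comm (x y : ℝ) : DD x y = DD y x := by
  unfold DD; rw [min_comm, abs_sub_comm]

lemma one_le_sqrt_min {x y : ℝ} (hx : 1 ≤ x) (hy : 1 ≤ y) :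
    1 ≤ Real.sqrt (min x y) := Real.one_le_sqrt.2 (le_min hx hy)

lemma one_le {x y : ℝ} (hx : 1 ≤ x) (hy : 1 ≤ y) : 1 ≤ DD x y := by
  have h1 := one_le_sqrt_min hx hy
  have h2 : 0 ≤ |x - y| := abs_nonneg _
  unfold DD; linarith

lemma pos {x y : ℝ} (hx : 1 ≤ x) (hy : 1 ≤ y) : 0 < DD x y :=
  lt_of_lt_of_le one_pos (one_le hx hy)

lemma eq_of_le {x y : ℝ} (h0 : 0 ≤ x) (h : x ≤ y) : DD x y = Real.sqrt x + (y - x) := by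
  unfold DD; rw [min_eq_left h, abs_sub_comm, abs_of_nonneg (by linarith)]

lemma sqrt_le_add {x y : ℝ} (hx : 1 ≤ x) (h : x ≤ y) :
    Real.sqrt y ≤ Real.sqrt x + (y - x) := by
  have hsx : 1 ≤ Real.sqrt x := Real.one_le_sqrt.2 hx
  have h2 : y ≤ (Real.sqrt x + (y - x))^2 := by
    have : Real.sqrt x ^ 2 = x := Real.sq_sqrt (by linarith)
    nlinarith [sq_nonneg (y - x)]
  calc Real.sqrt y ≤ Real.sqrt ((Real.sqrt x + (y - x))^2) := Real.sqrt_le_sqrt h2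
    _ = Real.sqrt x + (y - x) := Real.sqrt_sq (by linarith)

lemma sq_ge_max {x y : ℝ} (hx : 1 ≤ x) (hy : 1 ≤ y) : max x y ≤ DD x y ^ 2 := by
  have h1 := one_le_sqrt_min hx hy
  have h2 : Real.sqrt (min x y) ^ 2 = min x y := Real.sq_sqrt (by positivity)
  have h3 : 0 ≤ |x - y| := abs_nonneg _
  have h4 : max x y = min x y + |x - y| := by
    rcases le_total x y with h | h
    · rw [min_eq_left h, max_eq_right h, abs_sub_comm, abs_of_nonneg (by linarith)]; ring
    · rw [min_eq_right h, max_eq_left h, abs_of_nonneg (by linarith)]; ring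
  unfold DD; nlinarith

section Main
variable {x y z : ℝ}

/-- L1 in case x ≤ y -/
lemma L1aux (hx : 1 ≤ x) (hy : 1 ≤ y) (hz : 1 ≤ z) (hxy : x ≤ y) :
    min x z * min z y * DD x y ^ 2 ≤ 2 * min x y * (DD x z ^ 2 * DD z y ^ 2) := by
  have h0x : (0:ℝ) ≤ x := by linarith
  have h0z : (0:ℝ) ≤ z := by linarith
  have hMxy : min x y = x := min_eq_left hxy
  have hsx : 1 ≤ Real.sqrt x := Real.one_le_sqrt.2 hx
  have hD : DD x y = Real.sqrt x + (y - x) := eq_of_le h0x hxy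
  rcases le_total z x with hzx | hxz
  · -- z ≤ x ≤ y
    have hA : min x z = z := min_eq_right hzx
    have hB : min z y = z := min_eq_left (hzx.trans hxy)
    have hD1 : DD x z = Real.sqrt z + (x - z) := by rw [comm]; exact eq_of_le h0z hzx
    have hD2 : DD z y = Real.sqrt z + (y - z) := eq_of_le h0z (hzx.trans hxy)
    -- D ≤ D2, z ≤ x, x ≤ D1²
    have hsxz : Real.sqrt x ≤ Real.sqrt z + (x - z) := sqrt_le_add hz hzx
    have hDD2 : DD x y ≤ DD z y := by rw [hD, hD2]; linarith
    have hxD1 : x ≤ DD x z ^ 2 := le_trans (le_max_left _ _) (sq_ge_max hx hz)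
    have hD2pos : 0 < DD z y := pos hz hy
    have hDpos : 0 < DD x y := pos hx hy
    rw [hA, hB, hMxy]
    have hDsq : DD x y ^ 2 ≤ DD z y ^ 2 := pow_le_pow_left₀ hDpos.le hDD2 2
    have hzz : z * z ≤ x * x := mul_self_le_mul_self h0z hzx
    have c1 : z * z * DD x y ^ 2 ≤ x * x * DD z y ^ 2 :=
      mul_le_mul hzz hDsq (sq_nonneg _) (mul_nonneg h0x h0x)
    have c2 : x * x * DD z y ^ 2 ≤ x * DD x z ^ 2 * DD z y ^ 2 := by
      have := mul_le_mul_of_nonneg_left hxD1 h0x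
      nlinarith [sq_nonneg (DD z y)]
    nlinarith [sq_nonneg (DD x z), sq_nonneg (DD z y), mul_nonneg h0x (mul_nonneg (sq_nonneg (DD x z)) (sq_nonneg (DD z y)))]
  · rcases le_total z y with hzy | hyz
    · -- x ≤ z ≤ y
      have hA : min x z = x := min_eq_left hxz
      have hB : min z y = z := min_eq_left hzy
      have hD1 : DD x z = Real.sqrt x + (z - x) := eq_of_le h0x hxz
      have hD2 : DD z y = Real.sqrt z + (y - z) := eq_of_le h0z hzy
      have hszD1 : Real.sqrt z ≤ DD x z := by
        rw [hD1]; exact sqrt_le_add hx hxz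
      have hsz : 1 ≤ Real.sqrt z := Real.one_le_sqrt.2 hz
      have hzsz : Real.sqrt z ^ 2 = z := Real.sq_sqrt h0z
      have hDsplit : DD x y = DD x z + (y - z) := by rw [hD, hD1]; ring
      have hv : 0 ≤ y - z := by linarith
      rw [hA, hB, hMxy]
      -- goal: x * z * D^2 ≤ 2 x (D1^2 D2^2), D = D1+v, D2 = sqrt z + v
      rw [hDsplit, hD2]
      set D1 := DD x z
      set sz := Real.sqrt z
      set v := y - z
      have hD1pos : 0 < D1 := pos hx hz
      have key : z * (D1 + v)^2 ≤ 2 * (D1^2 * (sz + v)^2) := by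
        nlinarith [mul_nonneg hv (mul_nonneg (sub_nonneg.2 hszD1) (le_of_lt (lt_of_lt_of_le one_pos hsz))),
          mul_nonneg (mul_nonneg hv hv) (sub_nonneg.2 (mul_self_le_mul_self (by linarith : (0:ℝ) ≤ sz) hszD1)),
          mul_nonneg hv (sub_nonneg.2 hszD1), sq_nonneg (D1 - sz), sq_nonneg v,
          mul_pos hD1pos hD1pos, mul_nonneg hv (le_of_lt (lt_of_lt_of_le one_pos hsz))]
      nlinarith [key, hx, mul_nonneg (mul_nonneg h0x h0z) (sq_nonneg (D1 + v))]
    · -- x ≤ y ≤ z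
      have hA : min x z = x := min_eq_left hxz
      have hB : min z y = y := min_eq_right hyz
      have hD1 : DD x z = Real.sqrt x + (z - x) := eq_of_le h0x hxz
      have hDD1 : DD x y ≤ DD x z := by rw [hD, hD1]; linarith
      have hyD2 : y ≤ DD z y ^ 2 := le_trans (le_max_right _ _) (sq_ge_max hz hy)
      have hDpos : 0 < DD x y := pos hx hy
      have h0y : (0:ℝ) ≤ y := by linarith
      rw [hA, hB, hMxy]
      have hDsq : DD x y ^ 2 ≤ DD x z ^ 2 := pow_le_pow_left₀ hDpos.le hDD1 2
      have c1 : x * y * DD x y ^ 2 ≤ x * DD z y ^ 2 * DD x z ^ 2 := by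
        have hxy2 : x * y ≤ x * DD z y ^ 2 := mul_le_mul_of_nonneg_left hyD2 h0x
        exact mul_le_mul hxy2 hDsq (sq_nonneg _) (by positivity)
      nlinarith [mul_nonneg h0x (mul_nonneg (sq_nonneg (DD x z)) (sq_nonneg (DD z y)))]

/-- (C1): A·B·D² ≤ 2·M·D1²·D2² -/
lemma L1 (hx : 1 ≤ x) (hy : 1 ≤ y) (hz : 1 ≤ z) :
    min x z * min z y * DD x y ^ 2 ≤ 2 * min x y * (DD x z ^ 2 * DD z y ^ 2) := by
  rcases le_total x y with h | h
  · exact L1aux hx hy hz h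
  · have := L1aux hy hx hz h
    rw [min_comm x y, comm x y, min_comm x z, comm x z, min_comm z y, comm z y]
    linarith [this]


set_option maxHeartbeats 1000000 in
/-- (C2): for z ≥ y, (1+(z-y))·D² ≤ 2·D1²·D2² -/
lemma L2 (hx : 1 ≤ x) (hy : 1 ≤ y) (hz : 1 ≤ z) (hyz : y ≤ z) :
    (1 + (z - y)) * DD x y ^ 2 ≤ 2 * (DD x z ^ 2 * DD z y ^ 2) := by
  have h0x : (0:ℝ) ≤ x := by linarith
  have h0y : (0:ℝ) ≤ y := by linarith
  have hd : 0 ≤ z - y := by linarith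
  have hD2 : DD z y = Real.sqrt y + (z - y) := by rw [comm]; exact eq_of_le h0y hyz
  have hsy : 1 ≤ Real.sqrt y := Real.one_le_sqrt.2 hy
  have hdD2 : 1 + (z - y) ≤ DD z y := by rw [hD2]; linarith
  have hD2pos : 0 < DD z y := pos hz hy
  have hD1pos : 0 < DD x z := pos hx hz
  have hDpos : 0 < DD x y := pos hx hy
  rcases le_total x y with hxy | hyx
  · -- x ≤ y ≤ z : D ≤ D1, (1+d) ≤ D2 ≤ 2 D2²
    have hD : DD x y = Real.sqrt x + (y - x) := eq_of_le h0x hxy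
    have hD1 : DD x z = Real.sqrt x + (z - x) := eq_of_le h0x (hxy.trans hyz)
    have hDD1 : DD x y ≤ DD x z := by rw [hD, hD1]; linarith
    have hDsq : DD x y ^ 2 ≤ DD x z ^ 2 := pow_le_pow_left₀ hDpos.le hDD1 2
    have c1 : (1 + (z - y)) * DD x y ^ 2 ≤ DD z y * DD x z ^ 2 :=
      mul_le_mul hdD2 hDsq (sq_nonneg _) hD2pos.le
    nlinarith [mul_nonneg (sq_nonneg (DD x z)) (mul_nonneg hD2pos.le (sub_nonneg.2 (one_le hz hy)))]
  · rcases le_total x z with hxz | hzx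
    · -- y ≤ x ≤ z : D ≤ D2, 1+d ≤ z ≤ D1²
      have hD : DD x y = Real.sqrt y + (x - y) := by rw [comm]; exact eq_of_le h0y hyx
      have hDD2 : DD x y ≤ DD z y := by rw [hD, hD2]; linarith
      have hDsq : DD x y ^ 2 ≤ DD z y ^ 2 := pow_le_pow_left₀ hDpos.le hDD2 2
      have hzD1 : 1 + (z - y) ≤ DD x z ^ 2 := by
        have := le_trans (le_max_right x z) (sq_ge_max hx hz); linarith
      have c1 : (1 + (z - y)) * DD x y ^ 2 ≤ DD x z ^ 2 * DD z y ^ 2 :=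
        mul_le_mul hzD1 hDsq (sq_nonneg _) (sq_nonneg _)
      nlinarith [mul_nonneg (sq_nonneg (DD x z)) (sq_nonneg (DD z y))]
    · -- y ≤ z ≤ x : D ≤ D1 + d, etc.
      have h0z : (0:ℝ) ≤ z := by linarith
      have hD : DD x y = Real.sqrt y + (x - y) := by rw [comm]; exact eq_of_le h0y (hyz.trans hzx)
      have hD1 : DD x z = Real.sqrt z + (x - z) := by rw [comm]; exact eq_of_le h0z hzx
      have hsyz : Real.sqrt y ≤ Real.sqrt z := Real.sqrt_le_sqrt hyz
      set d := z - y with hdd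
      have hDle : DD x y ≤ DD x z + d := by rw [hD, hD1]; linarith
      have hzD1 : z ≤ DD x z ^ 2 := le_trans (le_max_right x z) (sq_ge_max hx hz)
      have hdD1 : 1 + d ≤ DD x z ^ 2 := by linarith
      set D1 := DD x z
      -- (D1+d)^2 ≤ (1+2d) D1^2 ≤ 2(1+d) D1^2, then multiply
      have e1 : (D1 + d)^2 ≤ (1 + 2*d) * D1^2 := by
        nlinarith [sq_nonneg (D1 - 1), mul_nonneg hd (sq_nonneg (D1 - 1)), hD1pos]
      have e2 : DD x y ^ 2 ≤ (D1 + d)^2 := pow_le_pow_left₀ hDpos.le hDle 2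
      have e3 : (1 + d) * DD x y ^ 2 ≤ (1+d) * ((1+2*d) * D1 ^ 2) :=
        mul_le_mul_of_nonneg_left (e2.trans e1) (by linarith : (0:ℝ) ≤ 1 + d)
      have e4 : (1+d) * ((1+2*d) * D1^2) ≤ (2 * (1+d)^2) * D1^2 := by
        have h24 : (1+d)*(1+2*d) ≤ 2*(1+d)^2 := by nlinarith
        calc (1+d) * ((1+2*d) * D1^2) = ((1+d)*(1+2*d)) * D1^2 := by ring
          _ ≤ (2*(1+d)^2) * D1^2 := mul_le_mul_of_nonneg_right h24 (sq_nonneg D1)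
      have e5 : (2 * (1+d)^2) * D1^2 ≤ 2 * (D1^2 * DD z y ^2) := by
        have h25 : (1+d)^2 ≤ DD z y ^ 2 := pow_le_pow_left₀ (by linarith) hdD2 2
        calc (2 * (1+d)^2) * D1^2 = 2 * ((1+d)^2 * D1^2) := by ring
          _ ≤ 2 * (DD z y ^2 * D1^2) := by
              have := mul_le_mul_of_nonneg_right h25 (sq_nonneg D1); linarith
          _ = 2 * (D1^2 * DD z y ^2) := by ring
      linarith

set_option maxHeartbeats 2000000 in
/-- (C3): for z ≤ y, disjunction of the two usable bounds. -/
lemma L3 (hx : 1 ≤ x) (hy : 1 ≤ y) (hz : 1 ≤ z) (hzy : z ≤ y) :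
    Real.sqrt z * DD x y ^ 2 ≤ 2 * (DD x z ^ 2 * DD z y) ∨
    (z + |x - z|) * DD x y ^ 2 ≤ 2 * (DD x z ^ 2 * DD z y ^ 2) := by
  have h0x : (0:ℝ) ≤ x := by linarith
  have h0y : (0:ℝ) ≤ y := by linarith
  have h0z : (0:ℝ) ≤ z := by linarith
  have hv : 0 ≤ y - z := by linarith
  have hD2 : DD z y = Real.sqrt z + (y - z) := eq_of_le h0z hzy
  have hsz : 1 ≤ Real.sqrt z := Real.one_le_sqrt.2 hz
  have hszsq : Real.sqrt z ^ 2 = z := Real.sq_sqrt h0z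
  have hD2pos : 0 < DD z y := pos hz hy
  have hD1pos : 0 < DD x z := pos hx hz
  have hDpos : 0 < DD x y := pos hx hy
  rcases le_total y x with hyx | hxy
  · -- (a) z ≤ y ≤ x : left branch
    left
    have hD : DD x y = Real.sqrt y + (x - y) := by rw [comm]; exact eq_of_le h0y hyx
    have hD1 : DD x z = Real.sqrt z + (x - z) := by rw [comm]; exact eq_of_le h0z (hzy.trans hyx)
    have hsyz : Real.sqrt y ≤ Real.sqrt z + (y - z) := sqrt_le_add hz hzy
    have hDD1 : DD x y ≤ DD x z := by rw [hD, hD1]; linarith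
    have hDsq : DD x y ^ 2 ≤ DD x z ^ 2 := pow_le_pow_left₀ hDpos.le hDD1 2
    have hszD2 : Real.sqrt z ≤ DD z y := by rw [hD2]; linarith
    have c1 : Real.sqrt z * DD x y ^ 2 ≤ DD z y * DD x z ^ 2 :=
      mul_le_mul hszD2 hDsq (sq_nonneg _) hD2pos.le
    nlinarith [mul_nonneg (sq_nonneg (DD x z)) hD2pos.le]
  · rcases le_total z x with hzx | hxz
    · -- (b) z ≤ x ≤ y: right branch, (z+|x-z|) = x
      right
      have habs : |x - z| = x - z := abs_of_nonneg (by linarith)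
      have hD : DD x y = Real.sqrt x + (y - x) := eq_of_le h0x hxy
      have hD1 : DD x z = Real.sqrt z + (x - z) := by rw [comm]; exact eq_of_le h0z hzx
      have hsxz : Real.sqrt x ≤ Real.sqrt z + (x - z) := sqrt_le_add hz hzx
      have hDD2 : DD x y ≤ DD z y := by rw [hD, hD2]; linarith
      have hDsq : DD x y ^ 2 ≤ DD z y ^ 2 := pow_le_pow_left₀ hDpos.le hDD2 2
      have hxD1 : x ≤ DD x z ^ 2 := le_trans (le_max_left x z) (sq_ge_max hx hz)
      rw [habs]
      have c1 : x * DD x y ^ 2 ≤ DD x z ^ 2 * DD z y ^ 2 :=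
        mul_le_mul hxD1 hDsq (sq_nonneg _) (sq_nonneg _)
      nlinarith [mul_nonneg (sq_nonneg (DD x z)) (sq_nonneg (DD z y))]
    · -- (c) x ≤ z ≤ y
      have habs : |x - z| = z - x := by rw [abs_sub_comm]; exact abs_of_nonneg (by linarith)
      have hD : DD x y = Real.sqrt x + (y - x) := eq_of_le h0x (hxz.trans hzy)
      have hD1 : DD x z = Real.sqrt x + (z - x) := eq_of_le h0x hxz
      have hsx : 1 ≤ Real.sqrt x := Real.one_le_sqrt.2 hx
      have hsxsq : Real.sqrt x ^ 2 = x := Real.sq_sqrt h0x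
      have hszD1 : Real.sqrt z ≤ DD x z := by rw [hD1]; exact sqrt_le_add hx hxz
      set sx := Real.sqrt x with hsxd
      set sz := Real.sqrt z with hszd
      set u := z - x with hu
      set v := y - z with hvd
      have hu0 : 0 ≤ u := by simp only [hu]; linarith
      have hDsplit : DD x y = DD x z + v := by rw [hD, hD1]; simp only [hvd]; ring
      set D1 := DD x z
      rcases le_total (sx * DD z y) (sz * D1) with hmin | hmin
      · -- min = W2 : left branch
        left
        -- key: sz * v ≤ D1^2
        have hsxv : sx * v ≤ sz * u := by
          rw [hD2] at hmin; nlinarith [hmin]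
        have hkey : sz * v ≤ D1 ^ 2 := by
          have h1 : sx * (sz * v) ≤ z * u := by
            have h := mul_le_mul_of_nonneg_left hsxv (by linarith : (0:ℝ) ≤ sz)
            nlinarith [h, hszsq]
          have h2 : z * u ≤ sx * D1 ^ 2 := by
            have hD1e : D1 = sx + u := hD1
            have hzxu : z = x + u := by simp only [hu]; ring
            rw [hD1e, hzxu]
            nlinarith [hsxsq, mul_nonneg hu0 hu0, mul_nonneg h0x hu0,
              mul_nonneg (sub_nonneg.2 hsx) (mul_nonneg hu0 hu0)]
          have h3 : sx * (sz * v) ≤ sx * D1^2 := le_trans h1 h2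
          have hsxpos : 0 < sx := by linarith
          exact le_of_mul_le_mul_left h3 hsxpos
        rw [hDsplit, hD2]
        have hszD1' : sz ≤ D1 := hszD1
        -- goal: sz*(D1+v)^2 ≤ 2*(D1^2*(sz+v))
        -- F = (D1²-sz·v)(v+sz) + v(D1-sz)² ≥ 0 identity
        nlinarith [mul_nonneg (sub_nonneg.2 hkey) (by linarith : (0:ℝ) ≤ v + sz),
          mul_nonneg hv (sq_nonneg (D1 - sz))]
      · -- min = W1 : right branch
        right
        have hszu : sz * u ≤ sx * v := by
          rw [hD2] at hmin; nlinarith [hmin]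
        have huv : u ≤ v := by
          have hsxz' : sx ≤ sz := Real.sqrt_le_sqrt hxz
          nlinarith [hszu]
        have huD1 : z + u ≤ D1 ^ 2 := by
          have hD1e : D1 = sx + u := hD1
          rw [hD1e]
          have hzxu : z = x + u := by simp only [hu]; ring
          rw [hzxu, hsxd]
          nlinarith [mul_nonneg (sub_nonneg.2 hsx) hu0, mul_nonneg hu0 hu0]
        rw [habs, hDsplit, hD2]
        -- goal: (z+u)*(D1+v)^2 ≤ 2*(D1^2*(sz+v)^2)
        have huszv : u ≤ 2 * (sz * v) := by nlinarith [huv, hv]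
        have st1 : (z+u)*(D1+v)^2 ≤ (z+u)*(2*D1^2 + 2*v^2) := by
          have h26 : (D1+v)^2 ≤ 2*D1^2 + 2*v^2 := by nlinarith [sq_nonneg (D1 - v)]
          exact mul_le_mul_of_nonneg_left h26 (by linarith : (0:ℝ) ≤ z + u)
        have st2 : (z+u)*(2*D1^2 + 2*v^2) ≤ 2*(D1^2*(sz+v)^2) := by
          have hA1 : u * D1^2 ≤ 2*(sz*v)*D1^2 :=
            mul_le_mul_of_nonneg_right huszv (sq_nonneg D1)
          have hA2 : (z+u) * v^2 ≤ D1^2 * v^2 :=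
            mul_le_mul_of_nonneg_right huD1 (sq_nonneg v)
          nlinarith [hA1, hA2, hszsq, mul_nonneg (mul_nonneg (by linarith : (0:ℝ) ≤ sz) hv) (sq_nonneg D1)]
        linarith

end Main
end DD
section convs
variable {A B M X Y K D D1 D2 : ℝ}

lemma convL1 (hD1 : 0 < D1) (hD2 : 0 < D2) (hA : 0 ≤ A) (hB : 0 ≤ B)
    (hb : A*B*D^2 ≤ 2*M*(D1^2*D2^2)) : A*B*(D/(D1*D2))^2 ≤ 2*M := by
  have e : A*B*(D/(D1*D2))^2 = (A*B*D^2)/((D1*D2)^2) := by rw [div_pow]; ring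
  rw [e, div_le_iff₀ (by positivity)]
  nlinarith [hb]

lemma convG (hD1 : 0 < D1) (hD2 : 0 < D2)
    (hb : Y*D^2 ≤ 2*(D1^2*D2^2)) : Y*(D/(D1*D2))^2 ≤ 2 := by
  have e : Y*(D/(D1*D2))^2 = (Y*D^2)/((D1*D2)^2) := by rw [div_pow]; ring
  rw [e, div_le_iff₀ (by positivity)]
  nlinarith [hb]

lemma convW2 (hD1 : 0 < D1) (hD2 : 0 < D2)
    (hb : K*D^2 ≤ 2*(D1^2*D2)) : (K*D2)*(D/(D1*D2))^2 ≤ 2 := by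
  have e : (K*D2)*(D/(D1*D2))^2 = (K*D^2)/(D1^2*D2) := by
    rw [div_pow]; field_simp
  rw [e, div_le_iff₀ (by positivity)]
  nlinarith [hb, mul_pos (mul_pos hD1 hD1) hD2]

lemma sqrtK_bound {sK : ℝ} (h1 : 1 ≤ sK) (h2 : sK^2 = K) (h3 : K ≤ M) :
    1 + (M - K) ≤ sK * (sK + (M - K)) := by nlinarith

end convs

open Real

/-- Bernoulli-type: for 0 < t ≤ 1, p > 0: 1 + p(1-t) ≤ t^(-p) -/
lemma bern {t p : ℝ} (ht : 0 < t) (ht1 : t ≤ 1) (hp : 0 < p) :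
    1 + p * (1 - t) ≤ t ^ (-p) := by
  have hlog : Real.log t ≤ t - 1 := Real.log_le_sub_one_of_pos ht
  have h1 : t ^ (-p) = Real.exp (Real.log t * (-p)) := Real.rpow_def_of_pos ht _
  have h2 : (-(Real.log t)) * p + 1 ≤ Real.exp ((-(Real.log t)) * p) := by
    have := Real.add_one_le_exp ((-(Real.log t)) * p)
    linarith
  have h3 : (1 - t) * p ≤ (-(Real.log t)) * p := by
    apply mul_le_mul_of_nonneg_right _ hp.le; linarith
  rw [h1]
  calc 1 + p * (1 - t) = (1-t)*p + 1 := by ring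
    _ ≤ (-(Real.log t)) * p + 1 := by linarith
    _ ≤ Real.exp ((-(Real.log t)) * p) := h2
    _ = Real.exp (Real.log t * (-p)) := by ring_nf

/-- tangent line: for 0 < y ≤ x, p > 0 : p·x^(-1-p)·(x-y) ≤ y^(-p) - x^(-p) -/
lemma tangent {x y p : ℝ} (hy : 0 < y) (hxy : y ≤ x) (hp : 0 < p) :
    p * x ^ (-(1+p)) * (x - y) ≤ y ^ (-p) - x ^ (-p) := by
  have hx : 0 < x := lt_of_lt_of_le hy hxy
  have ht : 0 < y / x := div_pos hy hx
  have ht1 : y / x ≤ 1 := (div_le_one hx).2 hxy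
  have hb := bern ht ht1 hp
  have hxppos : 0 < x ^ (-p) := Real.rpow_pos_of_pos hx _
  have hyx : (y/x) ^ (-p) = y ^ (-p) / x ^ (-p) := Real.div_rpow hy.le hx.le _
  rw [hyx] at hb
  have hb2 : (1 + p * (1 - y/x)) * x^(-p) ≤ y^(-p) := by
    have := mul_le_mul_of_nonneg_right hb hxppos.le
    rwa [div_mul_cancel₀] at this
    exact ne_of_gt hxppos
  have hexp2 : x^(-(1+p)) = x^(-p)/x := by
    rw [show (-(1+p)) = -p + (-1) by ring, Real.rpow_add hx, Real.rpow_neg_one]; ring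
  have e2 : p * x^(-(1+p)) * (x - y) = (p*(1 - y/x)) * x^(-p) := by
    rw [hexp2]; field_simp
  rw [e2]; nlinarith [hb2]

/-- tail sum: Σ_{t≥0} (c + a(t+1))^{-(1+p)} ≤ c^{-p}/(a p) -/
lemma tail_sum {c a p : ℝ} (hc : 0 < c) (ha : 0 < a) (hp : 0 < p) :
    Summable (fun t : ℕ => (c + a*((t:ℝ)+1)) ^ (-(1+p))) ∧
    ∑' t : ℕ, (c + a*((t:ℝ)+1)) ^ (-(1+p)) ≤ c^(-p)/(a*p) := by
  set f : ℕ → ℝ := fun t => (c + a*((t:ℝ)+1)) ^ (-(1+p)) with hf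
  have hpos : ∀ t : ℕ, (0:ℝ) < c + a*((t:ℝ)+1) := by
    intro t; have : (0:ℝ) ≤ (t:ℝ) := Nat.cast_nonneg t; nlinarith
  have hfnn : ∀ t, 0 ≤ f t := fun t => (Real.rpow_pos_of_pos (hpos t) _).le
  have hstep : ∀ t : ℕ, f t ≤ ((c + a*(t:ℝ))^(-p) - (c + a*((t:ℝ)+1))^(-p))/(a*p) := by
    intro t
    have hy : (0:ℝ) < c + a*(t:ℝ) := by have : (0:ℝ) ≤ (t:ℝ) := Nat.cast_nonneg t; nlinarith
    have hxy : c + a*(t:ℝ) ≤ c + a*((t:ℝ)+1) := by nlinarith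
    have := tangent hy hxy hp
    rw [show c + a*((t:ℝ)+1) - (c + a*(t:ℝ)) = a by ring] at this
    rw [le_div_iff₀ (by positivity)]
    calc f t * (a*p) = p * (c + a*((t:ℝ)+1))^(-(1+p)) * a := by rw [hf]; ring
      _ ≤ _ := this
  have hpartial : ∀ n : ℕ, ∑ t ∈ Finset.range n, f t ≤ c^(-p)/(a*p) := by
    intro n
    have htel : ∑ t ∈ Finset.range n, f t ≤ (c^(-p) - (c + a*(n:ℝ))^(-p))/(a*p) := by
      induction n with
      | zero => simp
      | succ m ih =>
        rw [Finset.sum_range_succ]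
        have := hstep m
        have hc2 : ((c + a*(m:ℝ))^(-p) - (c + a*((m:ℝ)+1))^(-p))/(a*p)
            = (c^(-p) - (c+a*((m:ℝ)+1))^(-p))/(a*p) - (c^(-p) - (c+a*(m:ℝ))^(-p))/(a*p) := by
          ring
        push_cast
        linarith [this, ih]
    have hnn : 0 ≤ (c + a*(n:ℝ))^(-p) := (Real.rpow_pos_of_pos (by have : (0:ℝ) ≤ (n:ℝ) := Nat.cast_nonneg n; nlinarith) _).le
    have hmono : (c^(-p) - (c + a*(n:ℝ))^(-p))/(a*p) ≤ c^(-p)/(a*p) := by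
      exact (div_le_div_iff_of_pos_right (by positivity)).2 (by linarith)
    linarith [htel]
  refine ⟨summable_of_sum_range_le hfnn hpartial, Real.tsum_le_of_sum_range_le hfnn hpartial⟩

/-- anti-monotone in base for negative exponents -/
lemma rpow_neg_anti {a b p : ℝ} (ha : 0 < a) (hab : a ≤ b) (hp : 0 ≤ p) :
    b ^ (-p) ≤ a ^ (-p) := by
  rw [Real.rpow_neg ha.le, Real.rpow_neg (ha.trans_le hab).le]
  exact inv_anti₀ (Real.rpow_pos_of_pos ha p) (Real.rpow_le_rpow ha.le hab hp)

lemma rpow_neg_div {a p : ℝ} (ha : 0 < a) : a^(-p)/a = a^(-(1+p)) := by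
  rw [show (-(1+p)) = -p + (-1) by ring, Real.rpow_add ha, Real.rpow_neg_one]; ring

/-- β·x^{-β} ≤ 1/2 for x ≥ 2, 0 < β ≤ 1 -/
lemma beta_bound {x β : ℝ} (hx : 2 ≤ x) (hβ : 0 < β) (hβ1 : β ≤ 1) :
    β * x^(-β) ≤ 1/2 := by
  have hlog1 : Real.log 2 ≤ 1 := by linarith [Real.log_le_sub_one_of_pos two_pos]
  have hlog0 : 0 ≤ Real.log 2 := Real.log_nonneg (by norm_num)
  have e : (2:ℝ)^β = 2 * Real.exp ((β-1)*Real.log 2) := by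
    rw [Real.rpow_def_of_pos two_pos,
      show Real.log 2 * β = Real.log 2 + (β-1)*Real.log 2 by ring, Real.exp_add,
      Real.exp_log two_pos]
  have h3 : 1 + (β-1)*Real.log 2 ≤ Real.exp ((β-1)*Real.log 2) := by
    linarith [Real.add_one_le_exp ((β-1)*Real.log 2)]
  have h4 : (β-1) ≤ (β-1)*Real.log 2 := by nlinarith
  have h2b : 2*β ≤ (2:ℝ)^β := by rw [e]; nlinarith
  have hp : (0:ℝ) < (2:ℝ)^β := Real.rpow_pos_of_pos two_pos _
  have hinv := mul_le_mul_of_nonneg_right h2b (inv_nonneg.2 hp.le)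
  rw [mul_inv_cancel₀ (ne_of_gt hp)] at hinv
  have hb2 : β * (2:ℝ)^(-β) ≤ 1/2 := by
    rw [Real.rpow_neg (by norm_num)]; linarith
  have h1 : x^(-β) ≤ (2:ℝ)^(-β) := rpow_neg_anti two_pos hx hβ.le
  nlinarith [mul_le_mul_of_nonneg_left h1 hβ.le]

/-- the core reduction -/
lemma core {A B M X r s β : ℝ} (hA : 0 < A) (hB : 0 < B) (hM : 0 < M) (hX : 0 < X)
    (hr : 0 < r) (hβ : 0 < β) (hβs : β ≤ s/2)
    (h1 : A*B*r^2 ≤ 2*M) (h2 : X*r^2 ≤ 2) :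
    M^β/(A^β*B^β) * (Real.sqrt (A*B/M) * r)^s ≤ 2^(s/2) * X^(-β) := by
  have hQ : (0:ℝ) < A*B/M := by positivity
  have hγ : 0 ≤ s/2 - β := by linarith
  have hr2 : (0:ℝ) < r^2 := by positivity
  -- (√Q · r)^s = (Q r²)^{s/2}
  have e1 : (Real.sqrt (A*B/M) * r)^s = (A*B/M * r^2)^(s/2) := by
    have base : Real.sqrt (A*B/M) * r = (A*B/M * r^2)^((1:ℝ)/2) := by
      rw [← Real.sqrt_eq_rpow, Real.sqrt_mul hQ.le, Real.sqrt_sq hr.le]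
    rw [base, ← Real.rpow_mul (by positivity), show (1/2:ℝ)*s = s/2 by ring]
  rw [e1]
  have esplit : (A*B/M * r^2)^(s/2) = (A*B/M * r^2)^β * (A*B/M*r^2)^(s/2-β) := by
    rw [← Real.rpow_add (by positivity), add_sub_cancel]
  rw [esplit]
  have eQ : (A*B/M)^β = A^β*B^β/M^β := by
    rw [Real.div_rpow (by positivity) hM.le, Real.mul_rpow hA.le hB.le]
  have efirst : M^β/(A^β*B^β) * ((A*B/M * r^2)^β * (A*B/M*r^2)^(s/2-β))
      = (r^2)^β * (A*B/M*r^2)^(s/2-β) := by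
    rw [Real.mul_rpow (by positivity) (by positivity), eQ]
    have hMβ : (0:ℝ) < M^β := Real.rpow_pos_of_pos hM _
    have hAβ : (0:ℝ) < A^β := Real.rpow_pos_of_pos hA _
    have hBβ : (0:ℝ) < B^β := Real.rpow_pos_of_pos hB _
    field_simp
  rw [efirst]
  have hb1 : (A*B/M*r^2)^(s/2-β) ≤ 2^(s/2-β) := by
    apply Real.rpow_le_rpow (by positivity) _ hγ
    rw [div_mul_eq_mul_div, div_le_iff₀ hM] at *
    nlinarith [h1]
  have hb2 : (r^2)^β ≤ 2^β * X^(-β) := by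
    have hrX : r^2 ≤ 2/X := by rw [le_div_iff₀ hX]; nlinarith [h2]
    calc (r^2)^β ≤ (2/X)^β := Real.rpow_le_rpow hr2.le hrX hβ.le
      _ = 2^β * X^(-β) := by
          rw [Real.div_rpow (by norm_num) hX.le, Real.rpow_neg hX.le]; ring
  calc (r^2)^β * (A*B/M*r^2)^(s/2-β) ≤ (2^β * X^(-β)) * 2^(s/2-β) := by
        apply mul_le_mul hb2 hb1 (by positivity) (by positivity)
    _ = 2^(s/2) * X^(-β) := by
        rw [show (s/2 : ℝ) = β + (s/2 - β) by ring, Real.rpow_add two_pos]; ring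

/-- The weight `w(i,j) = (√(i∧j) + |i−j|)/√(i∧j)` for positive integers `i, j`. -/
noncomputable def w (i j : ℕ+) : ℝ :=
  (Real.sqrt (min (i : ℝ) (j : ℝ)) + |(i : ℝ) - (j : ℝ)|) / Real.sqrt (min (i : ℝ) (j : ℝ))

set_option maxHeartbeats 4000000 in
/-- Let `s > 0` and `0 < β ≤ min{s/2, 1}`. Then for all positive integers `i` and `j`,
`∑_{k≥1} (i∧j)^β / ((i∧k)^β (k∧j)^β (1+|k−j|)) · (w(i,j)/(w(i,k)w(k,j)))^s ≤ 2^{s/2+2}/β`. -/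
theorem key_convolution_estimate (s β : ℝ) (hs : 0 < s) (hβ : 0 < β)
    (hβs : β ≤ min (s / 2) 1) (i j : ℕ+) :
    Summable (fun k : ℕ+ =>
      ((min i j : ℕ+) : ℝ) ^ β /
          (((min i k : ℕ+) : ℝ) ^ β * ((min k j : ℕ+) : ℝ) ^ β * (1 + |(k : ℝ) - (j : ℝ)|)) *
        (w i j / (w i k * w k j)) ^ s) ∧
    ∑' k : ℕ+,
      ((min i j : ℕ+) : ℝ) ^ β /
          (((min i k : ℕ+) : ℝ) ^ β * ((min k j : ℕ+) : ℝ) ^ β * (1 + |(k : ℝ) - (j : ℝ)|)) *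
        (w i j / (w i k * w k j)) ^ s ≤ 2 ^ (s / 2 + 2) / β := by
  have hβs2 : β ≤ s/2 := le_trans hβs (min_le_left _ _)
  have hβ1 : β ≤ 1 := le_trans hβs (min_le_right _ _)
  have hone : ∀ a : ℕ+, (1:ℝ) ≤ (a:ℝ) := fun a => by exact_mod_cast a.one_le
  have pmin : ∀ a b : ℕ+, ((min a b : ℕ+):ℝ) = min (a:ℝ) (b:ℝ) := by
    intro a b
    rcases le_total a b with h | h
    · rw [min_eq_left h, min_eq_left]; exact_mod_cast h
    · rw [min_eq_right h, min_eq_right]; exact_mod_cast h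
  have hI1 : (1:ℝ) ≤ (i:ℝ) := hone i
  have hJ1 : (1:ℝ) ≤ (j:ℝ) := hone j
  have hIpos : (0:ℝ) < (i:ℝ) := by linarith
  have hJpos : (0:ℝ) < (j:ℝ) := by linarith
  set c4 : ℝ := if i = 1 then (1/2:ℝ) else (i:ℝ)^(-(1+β)) with hc4
  have hc4nn : 0 ≤ c4 := by
    rw [hc4]; split
    · norm_num
    · positivity
  set T : ℕ+ → ℝ := fun k =>
      ((min i j : ℕ+) : ℝ) ^ β /
          (((min i k : ℕ+) : ℝ) ^ β * ((min k j : ℕ+) : ℝ) ^ β * (1 + |(k : ℝ) - (j : ℝ)|)) *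
        (w i j / (w i k * w k j)) ^ s with hT
  set P1 : ℕ+ → ℝ := fun k => if k < j then (1+((j:ℝ)-(k:ℝ)))^(-(1+β)) else 0 with hP1
  set P2 : ℕ+ → ℝ := fun k => if k = j then (j:ℝ)^(-β) else 0 with hP2
  set P3 : ℕ+ → ℝ := fun k => if j < k then (1+((k:ℝ)-(j:ℝ)))^(-(1+β)) else 0 with hP3
  set P4 : ℕ+ → ℝ := fun k => if k < j ∧ k ≤ i then c4 else 0 with hP4
  set P5 : ℕ+ → ℝ := fun k => if i < k then ((i:ℝ) + 2*((k:ℝ)-(i:ℝ)))^(-(1+β)) else 0 with hP5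
  have hP1nn : ∀ k, 0 ≤ P1 k := by
    intro k; rw [hP1]; dsimp only; split
    · rename_i h
      have : (k:ℝ) ≤ (j:ℝ) := by exact_mod_cast le_of_lt h
      apply Real.rpow_nonneg; linarith
    · exact le_refl 0
  have hP2nn : ∀ k, 0 ≤ P2 k := by
    intro k; rw [hP2]; dsimp only; split
    · positivity
    · exact le_refl 0
  have hP3nn : ∀ k, 0 ≤ P3 k := by
    intro k; rw [hP3]; dsimp only; split
    · rename_i h
      have : (j:ℝ) ≤ (k:ℝ) := by exact_mod_cast le_of_lt h
      apply Real.rpow_nonneg; linarith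
    · exact le_refl 0
  have hP4nn : ∀ k, 0 ≤ P4 k := by
    intro k; rw [hP4]; dsimp only; split
    · exact hc4nn
    · exact le_refl 0
  have hP5nn : ∀ k, 0 ≤ P5 k := by
    intro k; rw [hP5]; dsimp only; split
    · rename_i h
      have : (i:ℝ) ≤ (k:ℝ) := by exact_mod_cast le_of_lt h
      apply Real.rpow_nonneg; linarith
    · exact le_refl 0
  -- pointwise master bound
  have hTH : ∀ k : ℕ+, T k ≤ 2^(s/2) * (P1 k + P2 k + P3 k + P4 k + P5 k) := by
    intro k
    have hK1 : (1:ℝ) ≤ (k:ℝ) := hone k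
    have hKpos : (0:ℝ) < (k:ℝ) := by linarith
    have hApos : 0 < min (i:ℝ) (k:ℝ) := lt_min hIpos hKpos
    have hBpos : 0 < min (k:ℝ) (j:ℝ) := lt_min hKpos hJpos
    have hMpos : 0 < min (i:ℝ) (j:ℝ) := lt_min hIpos hJpos
    have hDpos : 0 < DD (i:ℝ) (j:ℝ) := DD.pos hI1 hJ1
    have hD1pos : 0 < DD (i:ℝ) (k:ℝ) := DD.pos hI1 hK1
    have hD2pos : 0 < DD (k:ℝ) (j:ℝ) := DD.pos hK1 hJ1
    set A : ℝ := min (i:ℝ) (k:ℝ) with hA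
    set B : ℝ := min (k:ℝ) (j:ℝ) with hB
    set M : ℝ := min (i:ℝ) (j:ℝ) with hM
    set D : ℝ := DD (i:ℝ) (j:ℝ) with hD
    set D1 : ℝ := DD (i:ℝ) (k:ℝ) with hD1
    set D2 : ℝ := DD (k:ℝ) (j:ℝ) with hD2
    set r : ℝ := D / (D1 * D2) with hr
    have hrpos : 0 < r := by positivity
    have hδnn : (0:ℝ) ≤ |(k:ℝ) - (j:ℝ)| := abs_nonneg _
    have hδpos : (0:ℝ) < 1 + |(k:ℝ) - (j:ℝ)| := by linarith
    have nn1 := hP1nn k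
    have nn2 := hP2nn k
    have nn3 := hP3nn k
    have nn4 := hP4nn k
    have nn5 := hP5nn k
    have wratio : w i j / (w i k * w k j) = Real.sqrt (A*B/M) * r := by
      have hsA : (0:ℝ) < Real.sqrt A := Real.sqrt_pos.2 hApos
      have hsB : (0:ℝ) < Real.sqrt B := Real.sqrt_pos.2 hBpos
      have hsM : (0:ℝ) < Real.sqrt M := Real.sqrt_pos.2 hMpos
      have e1 : w i j = D / Real.sqrt M := by rw [hD, hM]; rfl
      have e2 : w i k = D1 / Real.sqrt A := by rw [hD1, hA]; rfl
      have e3 : w k j = D2 / Real.sqrt B := by rw [hD2, hB]; rfl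
      rw [e1, e2, e3, hr, Real.sqrt_div (by positivity : (0:ℝ) ≤ A*B) M,
          Real.sqrt_mul hApos.le]
      field_simp
    have hTeq : T k = (M^β/(A^β*B^β) * (Real.sqrt (A*B/M) * r)^s) / (1+|(k:ℝ)-(j:ℝ)|) := by
      rw [hT]; dsimp only
      rw [pmin i j, pmin i k, pmin k j, wratio, ← hA, ← hB, ← hM]
      rw [← div_div, div_mul_eq_mul_div]
    have hr2eq : r^2 = D^2/((D1*D2)^2) := by rw [hr, div_pow]
    have h1 : A*B*r^2 ≤ 2*M := by
      have hL1 := DD.L1 hI1 hJ1 hK1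
      rw [← hA, ← hB, ← hM, ← hD, ← hD1, ← hD2] at hL1
      rw [hr]
      exact convL1 hD1pos hD2pos hApos.le hBpos.le hL1
    have step : ∀ X : ℝ, 0 < X → X * r^2 ≤ 2 →
        T k ≤ 2^(s/2) * (X^(-β) / (1 + |(k:ℝ) - (j:ℝ)|)) := by
      intro X hX h2
      have hcore := core hApos hBpos hMpos hX hrpos hβ hβs2 h1 h2
      rw [hTeq, div_le_iff₀ hδpos]
      calc M^β/(A^β*B^β) * (Real.sqrt (A*B/M) * r)^s ≤ 2^(s/2) * X^(-β) := hcore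
        _ = 2^(s/2) * (X^(-β)/(1+|(k:ℝ)-(j:ℝ)|)) * (1+|(k:ℝ)-(j:ℝ)|) := by
            field_simp
    have combine : ∀ X : ℝ, 0 < X → X * r^2 ≤ 2 →
        X^(-β)/(1+|(k:ℝ)-(j:ℝ)|) ≤ P1 k + P2 k + P3 k + P4 k + P5 k →
        T k ≤ 2^(s/2) * (P1 k + P2 k + P3 k + P4 k + P5 k) := by
      intro X hX h2 hle
      calc T k ≤ 2^(s/2)*(X^(-β)/(1+|(k:ℝ)-(j:ℝ)|)) := step X hX h2
        _ ≤ _ := mul_le_mul_of_nonneg_left hle (by positivity)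
    rcases lt_trichotomy k j with hkj | hkj | hkj
    · -- k < j
      have hKJ' : (k:ℕ) < (j:ℕ) := hkj
      have hKJ1 : (k:ℝ) + 1 ≤ (j:ℝ) := by exact_mod_cast Nat.succ_le_of_lt hKJ'
      have hKJ : (k:ℝ) ≤ (j:ℝ) := by linarith
      have hδ : |(k:ℝ) - (j:ℝ)| = (j:ℝ) - (k:ℝ) := by
        rw [abs_sub_comm]; exact abs_of_nonneg (by linarith)
      have hD2K : D2 = Real.sqrt (k:ℝ) + ((j:ℝ) - (k:ℝ)) := by
        rw [hD2]; exact DD.eq_of_le (by linarith) hKJ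
      have hsK1 : 1 ≤ Real.sqrt (k:ℝ) := Real.one_le_sqrt.2 hK1
      have hsKsq : Real.sqrt (k:ℝ) ^ 2 = (k:ℝ) := Real.sq_sqrt (by linarith)
      have landP1 : ∀ X : ℝ, 1 + |(k:ℝ)-(j:ℝ)| ≤ X →
          X^(-β)/(1+|(k:ℝ)-(j:ℝ)|) ≤ P1 k + P2 k + P3 k + P4 k + P5 k := by
        intro X hX1
        have h5 : X^(-β) ≤ (1+|(k:ℝ)-(j:ℝ)|)^(-β) := rpow_neg_anti hδpos hX1 hβ.le
        have h6 := (div_le_div_iff_of_pos_right hδpos).2 h5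
        have h7 : (1+|(k:ℝ)-(j:ℝ)|)^(-β)/(1+|(k:ℝ)-(j:ℝ)|) = P1 k := by
          rw [rpow_neg_div hδpos, hP1]; dsimp only; rw [if_pos hkj, hδ]
        rw [h7] at h6
        linarith [nn2, nn3, nn4, nn5]
      rcases DD.L3 hI1 hJ1 hK1 hKJ with hb | hb
      · -- branch 1 : X = √K * D2 ≥ 1 + δ, lands in P1
        rw [← hD, ← hD1, ← hD2] at hb
        refine combine (Real.sqrt (k:ℝ) * D2) (by positivity) ?_ ?_
        · rw [hr]; exact convW2 hD1pos hD2pos hb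
        · apply landP1
          rw [hδ, hD2K]
          exact sqrtK_bound hsK1 hsKsq hKJ
      · -- branch 2 : X = K + |I-K|
        rw [← hD, ← hD1, ← hD2] at hb
        have hXpos : (0:ℝ) < (k:ℝ) + |(i:ℝ) - (k:ℝ)| := by
          have := abs_nonneg ((i:ℝ) - (k:ℝ)); linarith
        refine combine ((k:ℝ) + |(i:ℝ) - (k:ℝ)|) hXpos ?_ ?_
        · rw [hr]; exact convG hD1pos hD2pos hb
        · rcases le_total (1 + |(k:ℝ)-(j:ℝ)|) ((k:ℝ) + |(i:ℝ) - (k:ℝ)|) with hm | hm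
          · exact landP1 _ hm
          · -- X ≤ 1 + δ
            set X : ℝ := (k:ℝ) + |(i:ℝ) - (k:ℝ)| with hX
            have hfrac0 : X^(-β)/(1+|(k:ℝ)-(j:ℝ)|) ≤ X^(-(1+β)) := by
              have h9 : (1:ℝ)/(1+|(k:ℝ)-(j:ℝ)|) ≤ 1/X := one_div_le_one_div_of_le hXpos hm
              have h6 : X^(-β)/(1+|(k:ℝ)-(j:ℝ)|) ≤ X^(-β)/X := by
                have hnn : (0:ℝ) ≤ X^(-β) := Real.rpow_nonneg hXpos.le _
                calc X^(-β)/(1+|(k:ℝ)-(j:ℝ)|) = X^(-β) * (1/(1+|(k:ℝ)-(j:ℝ)|)) := by ring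
                  _ ≤ X^(-β) * (1/X) := mul_le_mul_of_nonneg_left h9 hnn
                  _ = X^(-β)/X := by ring
              rwa [rpow_neg_div hXpos] at h6
            rcases le_or_gt k i with hki | hki
            · -- k ≤ i : X = I
              have hIK : (k:ℝ) ≤ (i:ℝ) := by exact_mod_cast hki
              have habs : |(i:ℝ) - (k:ℝ)| = (i:ℝ) - (k:ℝ) := abs_of_nonneg (by linarith)
              have hXI : X = (i:ℝ) := by rw [hX, habs]; ring
              by_cases hi1 : i = 1
              · -- k = i = 1, X = 1
                have hk1 : k = 1 := le_antisymm (hi1 ▸ hki) k.one_le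
                have hXone : X = 1 := by
                  rw [hXI, hi1]; norm_num
                have hP4v : P4 k = 1/2 := by
                  rw [hP4]; dsimp only; rw [if_pos ⟨hkj, hki⟩, hc4, if_pos hi1]
                have hK1' : (k:ℝ) = 1 := by rw [hk1]; norm_num
                have h8 : X^(-β)/(1+|(k:ℝ)-(j:ℝ)|) ≤ 1/2 := by
                  rw [hXone, Real.one_rpow, hδ]
                  rw [div_le_div_iff₀ (by linarith) (by norm_num)]
                  linarith
                rw [← hP4v] at h8
                linarith [nn1, nn2, nn3, nn5]
              · -- i ≥ 2
                have hP4v : P4 k = (i:ℝ)^(-(1+β)) := by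
                  rw [hP4]; dsimp only; rw [if_pos ⟨hkj, hki⟩, hc4, if_neg hi1]
                have h8 : X^(-(1+β)) = P4 k := by rw [hXI, hP4v]
                rw [h8] at hfrac0
                linarith [nn1, nn2, nn3, nn5]
            · -- i < k : lands in P5
              have hIK : (i:ℝ) ≤ (k:ℝ) := by exact_mod_cast le_of_lt hki
              have habs : |(i:ℝ) - (k:ℝ)| = (k:ℝ) - (i:ℝ) := by
                rw [abs_sub_comm]; exact abs_of_nonneg (by linarith)
              have hXe : X = (i:ℝ) + 2*((k:ℝ) - (i:ℝ)) := by rw [hX, habs]; ring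
              have hP5v : P5 k = ((i:ℝ) + 2*((k:ℝ)-(i:ℝ)))^(-(1+β)) := by
                rw [hP5]; dsimp only; rw [if_pos hki]
              have h8 : X^(-(1+β)) = P5 k := by rw [hXe, hP5v]
              rw [h8] at hfrac0
              linarith [nn1, nn2, nn3, nn4]
    · -- k = j
      have hKJe : (k:ℝ) = (j:ℝ) := by rw [hkj]
      have hδ0 : |(k:ℝ) - (j:ℝ)| = 0 := by rw [hKJe, sub_self, abs_zero]
      have hD1eq : D1 = D := by rw [hD1, hD, hKJe]
      have hD2eq : D2 = Real.sqrt (j:ℝ) := by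
        rw [hD2, hKJe]; unfold DD; rw [min_self, sub_self, abs_zero, add_zero]
      refine combine (j:ℝ) hJpos ?_ ?_
      · have e : (j:ℝ) * r^2 = 1 := by
          rw [hr2eq, hD1eq, hD2eq, mul_pow, Real.sq_sqrt hJpos.le]
          field_simp
        rw [e]; norm_num
      · have hP2v : P2 k = (j:ℝ)^(-β) := by
          rw [hP2]; dsimp only; rw [if_pos hkj]
        rw [hδ0]
        norm_num
        rw [← hP2v]
        linarith [nn1, nn3, nn4, nn5]
    · -- j < k
      have hJK' : (j:ℕ) < (k:ℕ) := hkj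
      have hJK1 : (j:ℝ) + 1 ≤ (k:ℝ) := by exact_mod_cast Nat.succ_le_of_lt hJK'
      have hJK : (j:ℝ) ≤ (k:ℝ) := by linarith
      have hδ : |(k:ℝ) - (j:ℝ)| = (k:ℝ) - (j:ℝ) := abs_of_nonneg (by linarith)
      have hb := DD.L2 hI1 hJ1 hK1 hJK
      rw [← hD, ← hD1, ← hD2] at hb
      refine combine (1 + ((k:ℝ) - (j:ℝ))) (by linarith) ?_ ?_
      · rw [hr]; exact convG hD1pos hD2pos hb
      · have h7 : (1+((k:ℝ)-(j:ℝ)))^(-β)/(1+|(k:ℝ)-(j:ℝ)|) = P3 k := by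
          rw [hδ, rpow_neg_div (by linarith), hP3]; dsimp only; rw [if_pos hkj]
        rw [h7]
        linarith [nn1, nn2, nn4, nn5]
    -- nonnegativity of T
  have hwpos : ∀ a b : ℕ+, 0 < w a b := by
    intro a b
    have h1 : (1:ℝ) ≤ Real.sqrt (min ((a:ℕ+):ℝ) (b:ℝ)) :=
      Real.one_le_sqrt.2 (le_min (hone a) (hone b))
    have h2 : (0:ℝ) ≤ |(a:ℝ) - (b:ℝ)| := abs_nonneg _
    unfold w
    positivity
  have hTnn : ∀ k, 0 ≤ T k := by
    intro k
    rw [hT]; dsimp only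
    have h1 := hwpos i j
    have h2 := hwpos i k
    have h3 := hwpos k j
    have h4 : (0:ℝ) ≤ 1 + |(k:ℝ) - (j:ℝ)| := by have := abs_nonneg ((k:ℝ)-(j:ℝ)); linarith
    have h5 : (0:ℝ) < ((min i j : ℕ+):ℝ) := by
      have := hone (min i j); linarith
    have h6 : (0:ℝ) < ((min i k : ℕ+):ℝ) := by
      have := hone (min i k); linarith
    have h7 : (0:ℝ) < ((min k j : ℕ+):ℝ) := by
      have := hone (min k j); linarith
    positivity
  -- summability and tsum bounds for the pieces
  obtain ⟨hg1summ, hg1sum⟩ := tail_sum (c:=1) (a:=1) (p:=β) one_pos one_pos hβ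
  have hg1bound : ∑' t:ℕ, ((1:ℝ) + 1*((t:ℝ)+1))^(-(1+β)) ≤ 1/β := by
    calc ∑' t:ℕ, ((1:ℝ) + 1*((t:ℝ)+1))^(-(1+β)) ≤ (1:ℝ)^(-β)/(1*β) := hg1sum
      _ = 1/β := by rw [Real.one_rpow]; ring
  have hg1nn : ∀ t : ℕ, (0:ℝ) ≤ ((1:ℝ) + 1*((t:ℝ)+1))^(-(1+β)) := by
    intro t
    apply Real.rpow_nonneg
    have : (0:ℝ) ≤ (t:ℝ) := Nat.cast_nonneg t
    linarith
  -- P1 : comparison along an injection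
  have hP1cmp : ∀ k : ℕ+, P1 k ≤ (fun t : ℕ => ((1:ℝ) + 1*((t:ℝ)+1))^(-(1+β)))
      (if k < j then (j:ℕ) - (k:ℕ) - 1 else (j:ℕ) + (k:ℕ)) := by
    intro k
    by_cases h : k < j
    · rw [if_pos h, hP1]; dsimp only; rw [if_pos h]
      apply le_of_eq
      congr 1
      have hlt : (k:ℕ) < (j:ℕ) := h
      have : ((j:ℕ) - (k:ℕ) - 1 : ℕ) + 1 = (j:ℕ) - (k:ℕ) := by omega
      have e1 : (((j:ℕ) - (k:ℕ) - 1 : ℕ):ℝ) + 1 = (((j:ℕ) - (k:ℕ) : ℕ):ℝ) := by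
        rw [← this]; push_cast; ring
      rw [one_mul] ; rw [e1, Nat.cast_sub (le_of_lt hlt)]
      try ring
    · rw [if_neg h, hP1]; dsimp only; rw [if_neg h]
      exact hg1nn _
  have hP1inj : Function.Injective
      (fun k : ℕ+ => if k < j then (j:ℕ) - (k:ℕ) - 1 else (j:ℕ) + (k:ℕ)) := by
    intro a b hab
    dsimp only at hab
    have ha1 : 1 ≤ (a:ℕ) := a.one_le
    have hb1 : 1 ≤ (b:ℕ) := b.one_le
    by_cases ha : a < j
    · by_cases hb : b < j
      · rw [if_pos ha, if_pos hb] at hab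
        have ha' : (a:ℕ) < (j:ℕ) := ha
        have hb' : (b:ℕ) < (j:ℕ) := hb
        exact PNat.coe_injective (by omega)
      · rw [if_pos ha, if_neg hb] at hab
        have ha' : (a:ℕ) < (j:ℕ) := ha
        exact absurd hab (by omega)
    · by_cases hb : b < j
      · rw [if_neg ha, if_pos hb] at hab
        have hb' : (b:ℕ) < (j:ℕ) := hb
        exact absurd hab (by omega)
      · rw [if_neg ha, if_neg hb] at hab
        exact PNat.coe_injective (by omega)
  have hP1summ : Summable P1 :=
    Summable.of_nonneg_of_le hP1nn hP1cmp (hg1summ.comp_injective hP1inj)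
  have hP1sum : ∑' k, P1 k ≤ 1/β := by
    refine le_trans (Summable.tsum_le_tsum_of_inj _ hP1inj (fun c _ => hg1nn c) hP1cmp hP1summ hg1summ) hg1bound
  -- P3
  have hP3pair : Summable P3 ∧ ∑' k, P3 k ≤ 1/β := by
    set ι : ℕ → ℕ+ := fun t => j + Nat.succPNat t with hι
    have hιco : ∀ t : ℕ, ((ι t : ℕ+):ℕ) = (j:ℕ) + t + 1 := by
      intro t; rw [hι]; simp only [PNat.add_coe, Nat.succPNat_coe]; omega
    have hιinj : Function.Injective ι := by
      intro a b hab
      have := congrArg (fun x : ℕ+ => (x:ℕ)) hab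
      simp only [hιco] at this
      omega
    have hsupp : ∀ k ∉ Set.range ι, P3 k = 0 := by
      intro k hk
      rw [hP3]; dsimp only
      rw [if_neg]
      intro hc
      apply hk
      have hc' : (j:ℕ) < (k:ℕ) := hc
      refine ⟨(k:ℕ) - (j:ℕ) - 1, ?_⟩
      apply PNat.coe_injective
      rw [hιco]; omega
    have heq : ∀ t : ℕ, P3 (ι t) = ((1:ℝ) + 1*((t:ℝ)+1))^(-(1+β)) := by
      intro t
      rw [hP3]; dsimp only
      have hlt : j < ι t := by
        have : (j:ℕ) < ((ι t : ℕ+):ℕ) := by rw [hιco]; omega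
        exact this
      rw [if_pos hlt]
      congr 1
      have : ((ι t : ℕ+):ℝ) = (j:ℝ) + (t:ℝ) + 1 := by
        have := hιco t
        have e2 : (((ι t : ℕ+):ℕ):ℝ) = (((j:ℕ) + t + 1 : ℕ):ℝ) := by rw [this]
        push_cast at e2
        exact e2
      rw [this]
      ring
    have hsumm : Summable P3 := by
      rw [← hιinj.summable_iff hsupp]
      apply Summable.congr hg1summ
      intro t; exact (heq t).symm
    refine ⟨hsumm, ?_⟩
    have hsupp' : Function.support P3 ⊆ Set.range ι := by
      intro x hx
      by_contra hcon
      exact hx (hsupp x hcon)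
    rw [← hιinj.tsum_eq hsupp']
    calc ∑' t : ℕ, P3 (ι t) = ∑' t : ℕ, ((1:ℝ) + 1*((t:ℝ)+1))^(-(1+β)) :=
          tsum_congr heq
        _ ≤ 1/β := hg1bound
  obtain ⟨hP3summ, hP3sum⟩ := hP3pair
  -- P2
  have hP2summ : Summable P2 := by
    rw [hP2]; exact (hasSum_ite_eq j ((j:ℝ)^(-β))).summable
  have hP2sum : ∑' k, P2 k = (j:ℝ)^(-β) := by
    rw [hP2]; exact tsum_ite_eq j (fun _ => (j:ℝ)^(-β))
  -- P5
  obtain ⟨hg5summ, hg5sum⟩ := tail_sum (c:=(i:ℝ)) (a:=2) (p:=β) hIpos two_pos hβ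
  have hg5nn : ∀ t : ℕ, (0:ℝ) ≤ ((i:ℝ) + 2*((t:ℝ)+1))^(-(1+β)) := by
    intro t
    apply Real.rpow_nonneg
    have : (0:ℝ) ≤ (t:ℝ) := Nat.cast_nonneg t
    linarith
  have hP5pair : Summable P5 ∧ ∑' k, P5 k ≤ (i:ℝ)^(-β)/(2*β) := by
    set ι : ℕ → ℕ+ := fun t => i + Nat.succPNat t with hι
    have hιco : ∀ t : ℕ, ((ι t : ℕ+):ℕ) = (i:ℕ) + t + 1 := by
      intro t; rw [hι]; simp only [PNat.add_coe, Nat.succPNat_coe]; omega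
    have hιinj : Function.Injective ι := by
      intro a b hab
      have := congrArg (fun x : ℕ+ => (x:ℕ)) hab
      simp only [hιco] at this
      omega
    have hsupp : ∀ k ∉ Set.range ι, P5 k = 0 := by
      intro k hk
      rw [hP5]; dsimp only
      rw [if_neg]
      intro hc
      apply hk
      have hc' : (i:ℕ) < (k:ℕ) := hc
      refine ⟨(k:ℕ) - (i:ℕ) - 1, ?_⟩
      apply PNat.coe_injective
      rw [hιco]; omega
    have heq : ∀ t : ℕ, P5 (ι t) = ((i:ℝ) + 2*((t:ℝ)+1))^(-(1+β)) := by
      intro t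
      rw [hP5]; dsimp only
      have hlt : i < ι t := by
        have : (i:ℕ) < ((ι t : ℕ+):ℕ) := by rw [hιco]; omega
        exact this
      rw [if_pos hlt]
      congr 1
      have : ((ι t : ℕ+):ℝ) = (i:ℝ) + (t:ℝ) + 1 := by
        have := hιco t
        have e2 : (((ι t : ℕ+):ℕ):ℝ) = (((i:ℕ) + t + 1 : ℕ):ℝ) := by rw [this]
        push_cast at e2
        exact e2
      rw [this]
      ring
    have hsumm : Summable P5 := by
      rw [← hιinj.summable_iff hsupp]
      apply Summable.congr hg5summ
      intro t; exact (heq t).symm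
    refine ⟨hsumm, ?_⟩
    have hsupp' : Function.support P5 ⊆ Set.range ι := by
      intro x hx
      by_contra hcon
      exact hx (hsupp x hcon)
    rw [← hιinj.tsum_eq hsupp']
    calc ∑' t : ℕ, P5 (ι t) = ∑' t : ℕ, ((i:ℝ) + 2*((t:ℝ)+1))^(-(1+β)) :=
          tsum_congr heq
        _ ≤ (i:ℝ)^(-β)/(2*β) := hg5sum
  obtain ⟨hP5summ, hP5sum⟩ := hP5pair
  -- P4
  have hP4pair : Summable P4 ∧ ∑' k, P4 k ≤ (if i = 1 then (1/2:ℝ) else (i:ℝ)^(-β)) := by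
    by_cases hi1 : i = 1
    · have hcmp : ∀ k : ℕ+, P4 k ≤ (fun k' : ℕ+ => if k' = 1 then c4 else 0) k := by
        intro k
        rw [hP4]; dsimp only
        split
        · rename_i hcond
          have hk1 : k = 1 := le_antisymm (hi1 ▸ hcond.2) k.one_le
          rw [if_pos hk1]
        · split
          · exact hc4nn
          · exact le_refl 0
      have hs2 : Summable (fun k' : ℕ+ => if k' = 1 then c4 else 0) :=
        (hasSum_ite_eq (1:ℕ+) c4).summable
      have hsummP4 : Summable P4 := Summable.of_nonneg_of_le hP4nn hcmp hs2
      refine ⟨hsummP4, ?_⟩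
      rw [if_pos hi1]
      calc ∑' k, P4 k ≤ ∑' k', (if k' = (1:ℕ+) then c4 else 0) :=
            Summable.tsum_le_tsum hcmp hsummP4 hs2
        _ = c4 := tsum_ite_eq (1:ℕ+) (fun _ => c4)
        _ = 1/2 := by rw [hc4, if_pos hi1]
    · -- i ≥ 2
      set v : ℕ → ℝ := fun n => if n < (i:ℕ) then (i:ℝ)^(-(1+β)) else 0 with hv
      have hvnn : ∀ n, 0 ≤ v n := by
        intro n; rw [hv]; dsimp only; split
        · positivity
        · exact le_refl 0
      have hvsumm : Summable v := by
        apply summable_of_ne_finset_zero (s := Finset.range (i:ℕ))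
        intro n hn
        rw [hv]; dsimp only
        rw [if_neg (by simpa using hn)]
      have hvsum : ∑' n, v n = (i:ℝ)^(-β) := by
        rw [tsum_eq_sum (s := Finset.range (i:ℕ))
          (by intro n hn; rw [hv]; dsimp only; rw [if_neg (by simpa using hn)])]
        have : ∀ n ∈ Finset.range (i:ℕ), v n = (i:ℝ)^(-(1+β)) := by
          intro n hn; rw [hv]; dsimp only; rw [if_pos (by simpa using hn)]
        rw [Finset.sum_congr rfl this, Finset.sum_const, Finset.card_range, nsmul_eq_mul]
        rw [show (-β) = 1 + (-(1+β)) by ring, Real.rpow_add hIpos, Real.rpow_one]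
      have hcmp : ∀ k : ℕ+, P4 k ≤ v ((k:ℕ) - 1) := by
        intro k
        rw [hP4]; dsimp only
        split
        · rename_i hcond
          rw [hv]; dsimp only
          have hki : (k:ℕ) ≤ (i:ℕ) := hcond.2
          have hk1 : 1 ≤ (k:ℕ) := k.one_le
          rw [if_pos (by omega)]
          rw [hc4, if_neg hi1]
        · exact hvnn _
      have hinj : Function.Injective (fun k : ℕ+ => (k:ℕ) - 1) := by
        intro a b hab
        dsimp only at hab
        have ha1 : 1 ≤ (a:ℕ) := a.one_le
        have hb1 : 1 ≤ (b:ℕ) := b.one_le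
        exact PNat.coe_injective (by omega)
      have hsummP4 : Summable P4 :=
        Summable.of_nonneg_of_le hP4nn hcmp (hvsumm.comp_injective hinj)
      refine ⟨hsummP4, ?_⟩
      rw [if_neg hi1]
      calc ∑' k, P4 k ≤ ∑' n, v n :=
            Summable.tsum_le_tsum_of_inj _ hinj (fun c _ => hvnn c) hcmp hsummP4 hvsumm
        _ = (i:ℝ)^(-β) := hvsum
  obtain ⟨hP4summ, hP4sum⟩ := hP4pair
  -- assemble
  set H : ℕ+ → ℝ := fun k => P1 k + P2 k + P3 k + P4 k + P5 k with hH
  have hHsumm : Summable H := by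
    rw [hH]
    exact (((hP1summ.add hP2summ).add hP3summ).add hP4summ).add hP5summ
  have hTH' : ∀ k, T k ≤ 2^(s/2) * H k := by
    intro k; rw [hH]; exact hTH k
  have hTsumm : Summable T :=
    Summable.of_nonneg_of_le hTnn hTH' (hHsumm.mul_left _)
  refine ⟨hTsumm, ?_⟩
  have hHsum : ∑' k, H k = (∑' k, P1 k) + (∑' k, P2 k) + (∑' k, P3 k)
      + (∑' k, P4 k) + (∑' k, P5 k) := by
    rw [hH]
    rw [Summable.tsum_add (((hP1summ.add hP2summ).add hP3summ).add hP4summ) hP5summ,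
        Summable.tsum_add ((hP1summ.add hP2summ).add hP3summ) hP4summ,
        Summable.tsum_add (hP1summ.add hP2summ) hP3summ,
        Summable.tsum_add hP1summ hP2summ]
  -- numeric bound
  have hJb : (j:ℝ)^(-β) ≤ 1 := Real.rpow_le_one_of_one_le_of_nonpos hJ1 (by linarith)
  have hIb : (i:ℝ)^(-β) ≤ 1 := Real.rpow_le_one_of_one_le_of_nonpos hI1 (by linarith)
  have hJbnn : 0 ≤ (j:ℝ)^(-β) := Real.rpow_nonneg hJpos.le _
  have hIbnn : 0 ≤ (i:ℝ)^(-β) := Real.rpow_nonneg hIpos.le _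
  have hc4b : β * (if i = 1 then (1/2:ℝ) else (i:ℝ)^(-β)) ≤ 1/2 := by
    split
    · nlinarith
    · rename_i hi1
      apply beta_bound _ hβ hβ1
      have h2i : 2 ≤ (i:ℕ) := by
        have h1i : 1 ≤ (i:ℕ) := i.one_le
        have hne : (i:ℕ) ≠ 1 := fun hc => hi1 (PNat.coe_injective (by simpa using hc))
        omega
      exact_mod_cast h2i
  have hc4nn' : 0 ≤ (if i = 1 then (1/2:ℝ) else (i:ℝ)^(-β)) := by
    split
    · norm_num
    · exact hIbnn
  have hHtot : ∑' k, H k ≤ 4/β := by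
    rw [hHsum]
    have hstep : (∑' k, P1 k) + (∑' k, P2 k) + (∑' k, P3 k) + (∑' k, P4 k) + (∑' k, P5 k)
        ≤ 1/β + (j:ℝ)^(-β) + 1/β + (if i = 1 then (1/2:ℝ) else (i:ℝ)^(-β)) + (i:ℝ)^(-β)/(2*β) := by
      have := hP2sum.le
      gcongr <;> assumption
    refine le_trans hstep ?_
    have e : 1/β + (j:ℝ)^(-β) + 1/β + (if i = 1 then (1/2:ℝ) else (i:ℝ)^(-β)) + (i:ℝ)^(-β)/(2*β)
        = (2 + (j:ℝ)^(-β)*β + β*(if i = 1 then (1/2:ℝ) else (i:ℝ)^(-β)) + (i:ℝ)^(-β)/2)/β := by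
      field_simp
      ring
    rw [e]
    apply (div_le_div_iff_of_pos_right hβ).2
    nlinarith [hc4b, hIb, hJbnn, mul_le_mul_of_nonneg_right hJb hβ.le]
  -- finish
  have hfinal1 : ∑' k, T k ≤ 2^(s/2) * ∑' k, H k := by
    calc ∑' k, T k ≤ ∑' k, 2^(s/2) * H k := Summable.tsum_le_tsum hTH' hTsumm (hHsumm.mul_left _)
      _ = 2^(s/2) * ∑' k, H k := tsum_mul_left
  have h2s : (0:ℝ) < 2^(s/2) := Real.rpow_pos_of_pos two_pos _
  have hfinal2 : (2:ℝ)^(s/2) * (4/β) = 2^(s/2+2)/β := by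
    rw [Real.rpow_add two_pos]
    have : (2:ℝ)^(2:ℝ) = 4 := by
      rw [show (2:ℝ) = ((2:ℕ):ℝ) from by norm_num, Real.rpow_natCast]
      norm_num
    rw [this]
    ring
  calc ∑' k, T k ≤ 2^(s/2) * ∑' k, H k := hfinal1
    _ ≤ 2^(s/2) * (4/β) := mul_le_mul_of_nonneg_left hHtot h2s.le
    _ = 2^(s/2+2)/β := hfinal2
end
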